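/- Fix an integer n ∈ {0, 1, 2}. In ℝ³ with the Euclidean norm, let L be the set of all ℤ-linear combinations of the vectors (0, √3, 0), (3, 0, 0) and (n, 0, 4). Then every nonzero element of L has norm at least √3, and the only elements of L of norm exactly √3 are (0, √3, 0) and (0, −√3, 0). -/

import Mathlib

noncomputable section

/-- For `n ∈ {0,1,2}`, in the lattice `L ⊆ ℝ³` generated by
`v₁ = (0, √3, 0)`, `v₂ = (3, 0, 0)` and `(n, 0, 4)`, every nonzero vector
has norm at least `√3`, and the only vectors of norm exactly `√3` are
`±v₁`. -/
theorem shortest_vectors_h2_odd (n : ℤ) (hn : n = 0 ∨ n = 1 ∨ n = 2) :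
    let v₁ : EuclideanSpace ℝ (Fin 3) := !₂[0, Real.sqrt 3, 0]
    let v₂ : EuclideanSpace ℝ (Fin 3) := !₂[3, 0, 0]
    let v₃ : EuclideanSpace ℝ (Fin 3) := !₂[(n : ℝ), 0, 4]
    let L : Set (EuclideanSpace ℝ (Fin 3)) :=
      {v | ∃ a b c : ℤ, v = (a : ℝ) • v₁ + (b : ℝ) • v₂ + (c : ℝ) • v₃}
    (∀ v ∈ L, v ≠ 0 → Real.sqrt 3 ≤ ‖v‖) ∧
    (∀ v ∈ L, ‖v‖ = Real.sqrt 3 → v = v₁ ∨ v = -v₁) := by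
  intro v₁ v₂ v₃ L
  have hsq : ∀ a b c : ℤ, ‖((a : ℝ) • v₁ + (b : ℝ) • v₂ + (c : ℝ) • v₃)‖ ^ 2
      = ((3 * a ^ 2 + (3 * b + c * n) ^ 2 + 16 * c ^ 2 : ℤ) : ℝ) := by
    intro a b c
    have h : ((a : ℝ) • v₁ + (b : ℝ) • v₂ + (c : ℝ) • v₃)
        = (!₂[3 * b + c * n, a * Real.sqrt 3, 4 * c] : EuclideanSpace ℝ (Fin 3)) := by
      ext i
      fin_cases i <;>
        simp [v₁, v₂, v₃, PiLp.add_apply, PiLp.smul_apply] <;> ring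
    rw [h, EuclideanSpace.norm_eq, Real.sq_sqrt (by positivity)]
    have h3 : Real.sqrt 3 ^ 2 = 3 := Real.sq_sqrt (by norm_num)
    simp [Fin.sum_univ_three, mul_pow, h3, sq_abs]
    ring
  constructor
  · rintro v ⟨a, b, c, rfl⟩ hv
    have habc : ¬ (a = 0 ∧ b = 0 ∧ c = 0) := by
      rintro ⟨rfl, rfl, rfl⟩
      apply hv
      simp
    have hZ : (3 : ℤ) ≤ 3 * a ^ 2 + (3 * b + c * n) ^ 2 + 16 * c ^ 2 := by
      by_cases hc : c = 0
      · subst hc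
        by_cases ha : a = 0
        · subst ha
          have hb : b ≠ 0 := by tauto
          rcases lt_or_gt_of_ne hb with h | h
          · nlinarith [sq_nonneg b]
          · nlinarith [sq_nonneg b]
        · rcases lt_or_gt_of_ne ha with h | h
          · nlinarith [sq_nonneg (3 * b)]
          · nlinarith [sq_nonneg (3 * b)]
      · rcases lt_or_gt_of_ne hc with h | h
        · nlinarith [sq_nonneg a, sq_nonneg (3 * b + c * n)]
        · nlinarith [sq_nonneg a, sq_nonneg (3 * b + c * n)]
    have h2 : (3 : ℝ) ≤ ‖(a : ℝ) • v₁ + (b : ℝ) • v₂ + (c : ℝ) • v₃‖ ^ 2 := by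
      rw [hsq a b c]
      exact_mod_cast hZ
    calc Real.sqrt 3 ≤ Real.sqrt (‖(a : ℝ) • v₁ + (b : ℝ) • v₂ + (c : ℝ) • v₃‖ ^ 2) :=
          Real.sqrt_le_sqrt h2
      _ = _ := Real.sqrt_sq (norm_nonneg _)
  · rintro v ⟨a, b, c, rfl⟩ hv
    have h2 : ‖(a : ℝ) • v₁ + (b : ℝ) • v₂ + (c : ℝ) • v₃‖ ^ 2 = 3 := by
      rw [hv, Real.sq_sqrt (by norm_num)]
    rw [hsq a b c] at h2
    have hZ : 3 * a ^ 2 + (3 * b + c * n) ^ 2 + 16 * c ^ 2 = 3 := by exact_mod_cast h2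
    have hc : c = 0 := by
      by_contra hc
      rcases lt_or_gt_of_ne hc with h | h <;>
        nlinarith [sq_nonneg a, sq_nonneg (3 * b + c * n)]
    subst hc
    have hb : b = 0 := by
      by_contra hb
      rcases lt_or_gt_of_ne hb with h | h <;>
        nlinarith [sq_nonneg a, sq_nonneg b]
    subst hb
    have ha : a = 1 ∨ a = -1 := by
      have h1 : a ^ 2 = 1 := by nlinarith
      have : (a - 1) * (a + 1) = 0 := by ring_nf; omega
      rcases mul_eq_zero.mp this with h | h
      · left; omega
      · right; omega
    rcases ha with rfl | rfl
    · left; simp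
    · right
      simp only [Int.cast_neg, Int.cast_one, Int.cast_zero, zero_smul, add_zero]
      module
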